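/- Let N ≥ 2 be an integer, α > 0, and p > q > 0 with p > N > q. Define H(t) := (p−N)·t^{p−q}·φ_N(α t^{N/(N−1)}) + α·(N/(N−1))·t^{((N−1)(p−q+1)+1)/(N−1)}·φ_{N−1}(α t^{N/(N−1)}) for t ≥ 0. Then H(0) = 0, H is strictly increasing on [0, ∞), and H(t) → ∞ as t → ∞. Consequently, for every Λ > 0 there exists a unique t₁ > 0 with H(t₁) = Λ(N − q). -/

import Mathlib

/-- φ_N(t) = e^t − Σ_{j=0}^{N−2} t^j/j! -/
noncomputable def phiN (N : ℕ) (t : ℝ) : ℝ :=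
  Real.exp t - ∑ j ∈ Finset.range (N - 1), t ^ j / (Nat.factorial j : ℝ)

/-- H(t) = (p−N)t^{p−q}φ_N(αt^{N/(N−1)})
      + α(N/(N−1)) t^{((N−1)(p−q+1)+1)/(N−1)} φ_{N−1}(αt^{N/(N−1)}) -/
noncomputable def Hfun (N : ℕ) (p q α : ℝ) (t : ℝ) : ℝ :=
  (p - (N:ℝ)) * t ^ (p - q) * phiN N (α * t ^ ((N:ℝ)/((N:ℝ)-1))) +
    α * ((N:ℝ)/((N:ℝ)-1)) *
      t ^ ((((N:ℝ)-1) * (p - q + 1) + 1) / ((N:ℝ)-1)) *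
      phiN (N - 1) (α * t ^ ((N:ℝ)/((N:ℝ)-1)))

lemma sum_lt_exp_aux (k : ℕ) {x : ℝ} (hx : 0 < x) :
    ∑ j ∈ Finset.range k, x ^ j / (Nat.factorial j : ℝ) < Real.exp x := by
  have h1 : ∑ j ∈ Finset.range k, x ^ j / (Nat.factorial j : ℝ)
      < ∑ j ∈ Finset.range (k + 1), x ^ j / (Nat.factorial j : ℝ) := by
    rw [Finset.sum_range_succ]
    have : 0 < x ^ k / (Nat.factorial k : ℝ) :=
      div_pos (pow_pos hx k) (by exact_mod_cast Nat.factorial_pos k)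
    linarith
  exact h1.trans_le (Real.sum_le_exp_of_nonneg hx.le _)

lemma phiN_pos (m : ℕ) {x : ℝ} (hx : 0 < x) : 0 < phiN m x :=
  sub_pos.2 (sum_lt_exp_aux _ hx)

lemma phiN_nonneg (m : ℕ) {x : ℝ} (hx : 0 ≤ x) : 0 ≤ phiN m x :=
  sub_nonneg.2 (Real.sum_le_exp_of_nonneg hx _)

lemma phiN_ge (m : ℕ) (hm : 1 ≤ m) {x : ℝ} (hx : 0 ≤ x) :
    x ^ (m - 1) / (Nat.factorial (m - 1) : ℝ) ≤ phiN m x := by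
  obtain ⟨k, rfl⟩ : ∃ k, m = k + 1 := ⟨m - 1, by omega⟩
  have h := Real.sum_le_exp_of_nonneg hx (k + 1)
  rw [Finset.sum_range_succ] at h
  simp only [phiN, Nat.add_sub_cancel]
  linarith

lemma hasDerivAt_sumExp (k : ℕ) (x : ℝ) :
    HasDerivAt (fun y : ℝ => ∑ j ∈ Finset.range (k + 1), y ^ j / (Nat.factorial j : ℝ))
      (∑ j ∈ Finset.range k, x ^ j / (Nat.factorial j : ℝ)) x := by
  have h : HasDerivAt (fun y : ℝ => ∑ j ∈ Finset.range (k + 1), y ^ j / (Nat.factorial j : ℝ))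
      (∑ j ∈ Finset.range (k + 1), (j : ℝ) * x ^ (j - 1) / (Nat.factorial j : ℝ)) x := by
    apply HasDerivAt.fun_sum
    intro j _
    exact (hasDerivAt_pow j x).div_const _
  convert h using 1
  rw [Finset.sum_range_succ']
  simp only [Nat.cast_zero, zero_mul, Nat.factorial_zero, Nat.cast_one, zero_div, add_zero]
  apply Finset.sum_congr rfl
  intro j _
  have : (Nat.factorial (j + 1) : ℝ) = (j + 1) * Nat.factorial j := by
    push_cast [Nat.factorial_succ]; ring
  rw [this]
  simp only [Nat.add_sub_cancel, Nat.cast_add, Nat.cast_one]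
  have hj : (Nat.factorial j : ℝ) ≠ 0 := by exact_mod_cast (Nat.factorial_pos j).ne'
  field_simp

lemma hasDerivAt_phiN (m : ℕ) (x : ℝ) :
    HasDerivAt (phiN m)
      (Real.exp x - ∑ j ∈ Finset.range (m - 2), x ^ j / (Nat.factorial j : ℝ)) x := by
  rcases Nat.lt_or_ge m 2 with hm | hm
  · have h1 : m - 1 = 0 := by omega
    have h2 : m - 2 = 0 := by omega
    have hfe : phiN m = Real.exp := by
      funext y; simp [phiN, h1]
    rw [hfe, h2]
    simpa using Real.hasDerivAt_exp x
  · obtain ⟨k, hk⟩ : ∃ k, m - 1 = k + 1 := ⟨m - 2, by omega⟩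
    have h2 : m - 2 = k := by omega
    have hfe : phiN m = fun y : ℝ =>
        Real.exp y - ∑ j ∈ Finset.range (k + 1), y ^ j / (Nat.factorial j : ℝ) := by
      funext y; simp [phiN, hk]
    rw [hfe, h2]
    exact (Real.hasDerivAt_exp x).sub (hasDerivAt_sumExp k x)

lemma phiN_strictMonoOn (m : ℕ) : StrictMonoOn (phiN m) (Set.Ici (0:ℝ)) := by
  apply strictMonoOn_of_deriv_pos (convex_Ici 0)
  · exact fun x _ => ((hasDerivAt_phiN m x).continuousAt).continuousWithinAt
  · intro x hx
    rw [interior_Ici] at hx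
    rw [(hasDerivAt_phiN m x).deriv]
    exact sub_pos.2 (sum_lt_exp_aux _ hx)

lemma continuous_phiN (m : ℕ) : Continuous (phiN m) := by
  unfold phiN
  exact Real.continuous_exp.sub (continuous_finset_sum _ fun j _ =>
    (continuous_pow j).div_const _)

/-- H(0) = 0, H is strictly increasing on [0,∞), H(t) → ∞,
and for every Λ > 0 there is a unique t₁ > 0 with H(t₁) = Λ(N − q). -/
theorem stmt_13 (N : ℕ) (hN : 2 ≤ N) (p q α : ℝ)
    (hq : 1 < q) (hqN : q < (N:ℝ)) (hp : (N:ℝ) < p) (hα : 0 < α) :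
    Hfun N p q α 0 = 0 ∧
    StrictMonoOn (Hfun N p q α) (Set.Ici (0:ℝ)) ∧
    Filter.Tendsto (Hfun N p q α) Filter.atTop Filter.atTop ∧
    ∀ Λ : ℝ, 0 < Λ →
      ∃! t₁ : ℝ, 0 < t₁ ∧ Hfun N p q α t₁ = Λ * ((N:ℝ) - q) := by
  have hN2 : (2:ℝ) ≤ (N:ℝ) := by exact_mod_cast hN
  have hN1 : (0:ℝ) < (N:ℝ) - 1 := by linarith
  set e : ℝ := (N:ℝ)/((N:ℝ)-1) with he_def
  have he : 0 < e := div_pos (by linarith) hN1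
  have hpq : 0 < p - q := by linarith
  have he2 : 0 < (((N:ℝ)-1) * (p - q + 1) + 1) / ((N:ℝ)-1) := by
    apply div_pos _ hN1
    nlinarith
  set e2 : ℝ := (((N:ℝ)-1) * (p - q + 1) + 1) / ((N:ℝ)-1) with he2_def
  have hpN : 0 < p - (N:ℝ) := by linarith
  have hc2 : 0 < α * e := mul_pos hα he
  -- generic term lemma
  have term_mono : ∀ (c a : ℝ), 0 < c → 0 < a → ∀ m : ℕ,
      StrictMonoOn (fun t : ℝ => c * t ^ a * phiN m (α * t ^ e)) (Set.Ici (0:ℝ)) := by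
    intro c a hc ha m x hx y hy hxy
    simp only
    have hy0 : (0:ℝ) < y := lt_of_le_of_lt hx hxy
    have hux : 0 ≤ α * x ^ e := mul_nonneg hα.le (Real.rpow_nonneg hx e)
    have huy : 0 < α * y ^ e := mul_pos hα (Real.rpow_pos_of_pos hy0 e)
    have huxy : α * x ^ e ≤ α * y ^ e :=
      mul_le_mul_of_nonneg_left (Real.rpow_le_rpow hx hxy.le he.le) hα.le
    have h1 : c * x ^ a * phiN m (α * x ^ e) ≤ c * x ^ a * phiN m (α * y ^ e) := by
      apply mul_le_mul_of_nonneg_left _ (mul_nonneg hc.le (Real.rpow_nonneg hx a))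
      exact (phiN_strictMonoOn m).monotoneOn hux huy.le huxy
    have h2 : c * x ^ a * phiN m (α * y ^ e) < c * y ^ a * phiN m (α * y ^ e) := by
      apply mul_lt_mul_of_pos_right _ (phiN_pos m huy)
      exact mul_lt_mul_of_pos_left (Real.rpow_lt_rpow hx hxy ha) hc
    linarith
  have hHmono : StrictMonoOn (Hfun N p q α) (Set.Ici (0:ℝ)) := by
    have h := (term_mono (p - (N:ℝ)) (p - q) hpN hpq N).add
      (term_mono (α * e) e2 hc2 he2 (N - 1))
    have hfe : Hfun N p q α =
        (fun t : ℝ => (p - (N:ℝ)) * t ^ (p - q) * phiN N (α * t ^ e)) +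
        (fun t : ℝ => (α * e) * t ^ e2 * phiN (N - 1) (α * t ^ e)) := by
      funext t
      simp only [Hfun, Pi.add_apply, he2_def, he_def]
    rw [hfe]
    exact h
  have hH0 : Hfun N p q α 0 = 0 := by
    simp [Hfun, Real.zero_rpow hpq.ne', Real.zero_rpow he2.ne']
    exact Or.inl (Or.inr (Real.zero_rpow he2.ne'))
  have hHcont : Continuous (Hfun N p q α) := by
    unfold Hfun
    have h1 : Continuous fun t : ℝ => t ^ (p - q) :=
      continuous_id.rpow_const fun x => Or.inr hpq.le
    have h2 : Continuous fun t : ℝ => t ^ e2 :=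
      continuous_id.rpow_const fun x => Or.inr he2.le
    have h3 : Continuous fun t : ℝ => t ^ e :=
      continuous_id.rpow_const fun x => Or.inr he.le
    have h4 : Continuous fun t : ℝ => α * t ^ e := continuous_const.mul h3
    exact ((continuous_const.mul h1).mul ((continuous_phiN N).comp h4)).add
      ((continuous_const.mul h2).mul ((continuous_phiN (N-1)).comp h4))
  have hHtop : Filter.Tendsto (Hfun N p q α) Filter.atTop Filter.atTop := by
    have hfac : (0:ℝ) < (Nat.factorial (N - 1) : ℝ) := by
      exact_mod_cast Nat.factorial_pos _
    have hg : Filter.Tendsto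
        (fun t : ℝ => (p - (N:ℝ)) * ((α * t ^ e) ^ (N - 1) / (Nat.factorial (N-1) : ℝ)))
        Filter.atTop Filter.atTop := by
      apply Filter.Tendsto.const_mul_atTop hpN
      apply Filter.Tendsto.atTop_div_const hfac
      exact (Filter.tendsto_pow_atTop (by omega : N - 1 ≠ 0)).comp
        ((tendsto_rpow_atTop he).const_mul_atTop hα)
    apply Filter.tendsto_atTop_mono' _ _ hg
    filter_upwards [Filter.eventually_ge_atTop (1:ℝ)] with t ht
    have ht0 : (0:ℝ) < t := lt_of_lt_of_le one_pos ht
    have hut : 0 ≤ α * t ^ e := mul_nonneg hα.le (Real.rpow_nonneg ht0.le e)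
    have hphi : (α * t ^ e) ^ (N - 1) / (Nat.factorial (N - 1) : ℝ)
        ≤ phiN N (α * t ^ e) := phiN_ge N (by omega) hut
    have ht1 : (1:ℝ) ≤ t ^ (p - q) := Real.one_le_rpow ht hpq.le
    have hterm2 : 0 ≤ α * e * t ^ e2 * phiN (N - 1) (α * t ^ e) :=
      mul_nonneg (mul_nonneg hc2.le (Real.rpow_nonneg ht0.le e2)) (phiN_nonneg _ hut)
    have hphi0 : 0 ≤ phiN N (α * t ^ e) := phiN_nonneg _ hut
    have h1 : (p - (N:ℝ)) * ((α * t ^ e) ^ (N - 1) / (Nat.factorial (N-1) : ℝ))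
        ≤ (p - (N:ℝ)) * t ^ (p - q) * phiN N (α * t ^ e) := by
      calc (p - (N:ℝ)) * ((α * t ^ e) ^ (N - 1) / (Nat.factorial (N-1) : ℝ))
          ≤ (p - (N:ℝ)) * phiN N (α * t ^ e) :=
            mul_le_mul_of_nonneg_left hphi hpN.le
        _ = (p - (N:ℝ)) * 1 * phiN N (α * t ^ e) := by ring
        _ ≤ (p - (N:ℝ)) * t ^ (p - q) * phiN N (α * t ^ e) := by
            apply mul_le_mul_of_nonneg_right _ hphi0
            exact mul_le_mul_of_nonneg_left ht1 hpN.le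
    simp only [Hfun]
    linarith
  refine ⟨hH0, hHmono, hHtop, ?_⟩
  intro Λ hΛ
  have htarget : 0 < Λ * ((N:ℝ) - q) := mul_pos hΛ (by linarith)
  obtain ⟨T, hT⟩ := (hHtop.eventually_ge_atTop (Λ * ((N:ℝ) - q))).and
    (Filter.eventually_ge_atTop (0:ℝ)) |>.exists
  have hmem : Λ * ((N:ℝ) - q) ∈ Set.Icc (Hfun N p q α 0) (Hfun N p q α T) :=
    ⟨by rw [hH0]; exact htarget.le, hT.1⟩
  obtain ⟨t₁, ht₁mem, ht₁⟩ := intermediate_value_Icc hT.2 hHcont.continuousOn hmem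
  have ht₁pos : 0 < t₁ := by
    rcases ht₁mem.1.lt_or_eq with h | h
    · exact h
    · exfalso; rw [← h, hH0] at ht₁; linarith
  refine ⟨t₁, ⟨ht₁pos, ht₁⟩, ?_⟩
  rintro t₂ ⟨ht₂pos, ht₂⟩
  exact hHmono.injOn ht₂pos.le ht₁pos.le (by rw [ht₁, ht₂])
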